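/- Let R be an associative ring and κ a regular cardinal. Every short exact sequence 0 → F → G → H → 0 of κ-flat left R-modules is a κ-filtered colimit of split short exact sequences of κ-flat left R-modules. -/

import Mathlib

open CategoryTheory CategoryTheory.Limits

universe u

/-- A category `J` is `κ`-filtered if every subdiagram of size `< κ` admits a cocone. -/
def IsCardFiltered (J : Type u) [Category.{u} J] (κ : Cardinal.{u}) : Prop :=
  ∀ (K : Type u) (_ : SmallCategory K), Cardinal.mk K < κ →
    Cardinal.mk (Σ (a : K) (b : K), a ⟶ b) < κ →
    ∀ F : K ⥤ J, Nonempty (Cocone F)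

variable {R : Type u} [Ring R]

/-- A left `R`-module is `κ`-flat if it is a `κ`-filtered colimit of projective
left `R`-modules. -/
def IsKappaFlat (κ : Cardinal.{u}) (F : ModuleCat.{u} R) : Prop :=
  ∃ (J : Type u) (_ : SmallCategory J) (_ : IsCardFiltered J κ)
    (D : J ⥤ ModuleCat.{u} R) (_ : ∀ j, Projective (D.obj j))
    (c : Cocone D) (_ : IsColimit c), Nonempty (c.pt ≅ F)

section Aux

lemma IsCardFiltered.isFiltered {J : Type u} [SmallCategory J] {κ : Cardinal.{u}}
    (h : IsCardFiltered J κ) (hκ : κ.IsRegular) : IsFiltered J := by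
  apply IsFiltered.of_cocone_nonempty.{u}
  intro K _ _ F
  exact h K _ ((Cardinal.lt_aleph0_of_finite K).trans_le hκ.aleph0_le)
    ((Cardinal.lt_aleph0_of_finite _).trans_le hκ.aleph0_le) F

/-- The constant cocone on a constant functor. -/
@[simps]
def constCocone (J : Type u) [SmallCategory J] {C : Type*} [Category C] (X : C) :
    Cocone ((Functor.const J).obj X) where
  pt := X
  ι := { app := fun _ => 𝟙 X, naturality := fun _ _ _ => by simp }

noncomputable def isColimitConstCocone (J : Type u) [SmallCategory J] [IsConnected J]
    {C : Type*} [Category C] (X : C) : IsColimit (_root_.constCocone J X) where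
  desc s := s.ι.app Classical.ofNonempty
  fac s j := by
    have hconst : ∀ a b : J, s.ι.app a = s.ι.app b := by
      intro a b
      apply constant_of_preserves_morphisms (α := (X ⟶ s.pt)) (fun k => s.ι.app k)
      intro j₁ j₂ f
      rw [← s.w f]
      simp
    exact (Category.id_comp _).trans (hconst Classical.ofNonempty j)
  uniq s m hm := (Category.id_comp m).symm.trans (hm Classical.ofNonempty)

lemma isKappaFlat_of_projective {κ : Cardinal.{u}} (hκ : κ.IsRegular)
    {J : Type u} [SmallCategory J] (hJ : IsCardFiltered J κ)
    (P : ModuleCat.{u} R) (hP : Projective P) : IsKappaFlat κ P := by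
  haveI := hJ.isFiltered hκ
  haveI := IsFiltered.isConnected J
  exact ⟨J, inferInstance, hJ, (Functor.const J).obj P, fun _ => hP,
    _root_.constCocone J P, _root_.isColimitConstCocone J P, ⟨Iso.refl P⟩⟩

variable {J : Type u} [SmallCategory J]

/-- The pointwise biproduct of a diagram with a constant. -/
@[simps]
noncomputable def biprodF (D : J ⥤ ModuleCat.{u} R) (P : ModuleCat.{u} R) : J ⥤ ModuleCat.{u} R where
  obj j := D.obj j ⊞ P
  map φ := biprod.map (D.map φ) (𝟙 P)
  map_id j := by apply biprod.hom_ext' <;> simp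
  map_comp φ ψ := by apply biprod.hom_ext' <;> simp

@[simps]
noncomputable def biprodCocone {D : J ⥤ ModuleCat.{u} R} (c : Cocone D) (P : ModuleCat.{u} R) :
    Cocone (biprodF D P) where
  pt := c.pt ⊞ P
  ι :=
    { app := fun j => biprod.map (c.ι.app j) (𝟙 P)
      naturality := fun a b f => by
        show biprod.map (D.map f) (𝟙 P) ≫ biprod.map (c.ι.app b) (𝟙 P)
          = biprod.map (c.ι.app a) (𝟙 P) ≫ 𝟙 (c.pt ⊞ P)
        apply biprod.hom_ext' <;> simp }

/-- The cocone on `D` induced by composing with `biprod.inl`. -/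
noncomputable def inlCocone {D : J ⥤ ModuleCat.{u} R} (P : ModuleCat.{u} R)
    (s : Cocone (biprodF D P)) : Cocone D where
  pt := s.pt
  ι :=
    { app := fun j => biprod.inl ≫ s.ι.app j
      naturality := fun a b f => by
        show D.map f ≫ biprod.inl ≫ s.ι.app b = (biprod.inl ≫ s.ι.app a) ≫ _
        rw [← s.w f]
        simp [biprodF] }

noncomputable def isColimitBiprodCocone [IsFiltered J] {D : J ⥤ ModuleCat.{u} R}
    {c : Cocone D} (hc : IsColimit c) (P : ModuleCat.{u} R) :
    IsColimit (biprodCocone c P) := by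
  haveI := IsFiltered.isConnected J
  have hconst : ∀ (s : Cocone (biprodF D P)) (a b : J),
      biprod.inr ≫ s.ι.app a = biprod.inr ≫ s.ι.app b := fun s a b =>
    constant_of_preserves_morphisms (fun k => biprod.inr ≫ s.ι.app k)
      (fun j₁ j₂ f => by
        show biprod.inr ≫ s.ι.app j₁ = biprod.inr ≫ s.ι.app j₂
        rw [← s.w f]
        simp [biprodF]) a b
  exact
    { desc := fun s => biprod.desc (hc.desc (inlCocone P s))
        (biprod.inr ≫ s.ι.app Classical.ofNonempty)
      fac := fun s j => by
        apply biprod.hom_ext'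
        · erw [biprod.inl_map_assoc, biprod.inl_desc]
          exact hc.fac (inlCocone P s) j
        · erw [biprod.inr_map_assoc, Category.id_comp, biprod.inr_desc]
          exact hconst s Classical.ofNonempty j
      uniq := fun s m hm => by
        apply biprod.hom_ext'
        · erw [biprod.inl_desc]
          refine hc.uniq (inlCocone P s) (biprod.inl ≫ m) (fun j => ?_)
          rw [show (inlCocone P s).ι.app j = biprod.inl ≫ s.ι.app j from rfl, ← hm j]
          erw [biprod.inl_map_assoc]
          rfl
        · erw [biprod.inr_desc, ← hm Classical.ofNonempty]
          erw [biprod.inr_map_assoc, Category.id_comp] }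

lemma isKappaFlat_biprod {κ : Cardinal.{u}} (hκ : κ.IsRegular) {X : ModuleCat.{u} R}
    (hX : IsKappaFlat κ X) (P : ModuleCat.{u} R) (hP : Projective P) :
    IsKappaFlat κ (X ⊞ P) := by
  obtain ⟨J', iJ', hJ', D, hproj, c, hc, ⟨e⟩⟩ := hX
  letI := iJ'
  haveI := hJ'.isFiltered hκ
  refine ⟨J', iJ', hJ', biprodF D P, fun j => ?_, biprodCocone c P,
    isColimitBiprodCocone hc P, ⟨biprod.mapIso e (Iso.refl P)⟩⟩
  haveI := hproj j
  haveI := hP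
  dsimp [biprodF]
  infer_instance

end Aux

section Main

variable {S : ShortComplex (ModuleCat.{u} R)} (hS : S.ShortExact)
  {J : Type u} [SmallCategory J] (D₃ : J ⥤ ModuleCat.{u} R)
  (e₃ : colimit D₃ ≅ S.X₃)
  (l : ∀ j, D₃.obj j ⟶ S.X₂) (hl : ∀ j, l j ≫ S.g = colimit.ι D₃ j ≫ e₃.hom)

/-- Correction terms measuring the failure of compatibility of the lifts `l`. -/
noncomputable def delta {j j' : J} (φ : j ⟶ j') :
    {d : D₃.obj j ⟶ S.X₁ // d ≫ S.f = l j - D₃.map φ ≫ l j'} := by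
  obtain ⟨d, hd⟩ := KernelFork.IsLimit.lift' hS.fIsKernel (l j - D₃.map φ ≫ l j')
    (by
      simp only [Preadditive.sub_comp, Category.assoc, hl]
      rw [← Category.assoc, colimit.w, sub_self])
  exact ⟨d, by simpa using hd⟩

lemma delta_id (j : J) : (delta hS D₃ e₃ l hl (𝟙 j)).1 = 0 := by
  haveI := hS.mono_f
  rw [← cancel_mono S.f, (delta hS D₃ e₃ l hl (𝟙 j)).2]
  simp

lemma delta_comp {j j' j'' : J} (φ : j ⟶ j') (ψ : j' ⟶ j'') :
    (delta hS D₃ e₃ l hl (φ ≫ ψ)).1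
      = (delta hS D₃ e₃ l hl φ).1 + D₃.map φ ≫ (delta hS D₃ e₃ l hl ψ).1 := by
  haveI := hS.mono_f
  rw [← cancel_mono S.f, Preadditive.add_comp, Category.assoc,
    (delta hS D₃ e₃ l hl (φ ≫ ψ)).2, (delta hS D₃ e₃ l hl φ).2, (delta hS D₃ e₃ l hl ψ).2]
  simp only [Functor.map_comp, Category.assoc, Preadditive.comp_sub]
  abel

/-- The middle diagram `j ↦ S.X₁ ⊞ D₃.obj j`. -/
noncomputable def Mfun : J ⥤ ModuleCat.{u} R where
  obj j := S.X₁ ⊞ D₃.obj j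
  map {j j'} φ := biprod.map (𝟙 S.X₁) (D₃.map φ)
    + biprod.snd ≫ (delta hS D₃ e₃ l hl φ).1 ≫ biprod.inl
  map_id j := by
    show biprod.map (𝟙 S.X₁) (D₃.map (𝟙 j))
        + biprod.snd ≫ (delta hS D₃ e₃ l hl (𝟙 j)).1 ≫ biprod.inl
      = 𝟙 (S.X₁ ⊞ D₃.obj j)
    rw [delta_id]
    apply biprod.hom_ext' <;> simp
  map_comp {a b c} φ ψ := by
    show biprod.map (𝟙 S.X₁) (D₃.map (φ ≫ ψ))
        + biprod.snd ≫ (delta hS D₃ e₃ l hl (φ ≫ ψ)).1 ≫ biprod.inl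
      = (biprod.map (𝟙 S.X₁) (D₃.map φ)
          + biprod.snd ≫ (delta hS D₃ e₃ l hl φ).1 ≫ biprod.inl)
        ≫ (biprod.map (𝟙 S.X₁) (D₃.map ψ)
          + biprod.snd ≫ (delta hS D₃ e₃ l hl ψ).1 ≫ biprod.inl)
    rw [delta_comp]
    apply biprod.hom_ext' <;>
      simp [Preadditive.comp_add, Preadditive.add_comp, Category.assoc] <;> abel

lemma inl_Mmap {j j' : J} (φ : j ⟶ j') :
    biprod.inl ≫ (Mfun hS D₃ e₃ l hl).map φ = biprod.inl := by
  simp [Mfun]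

lemma Mmap_snd {j j' : J} (φ : j ⟶ j') :
    (Mfun hS D₃ e₃ l hl).map φ ≫ biprod.snd = biprod.snd ≫ D₃.map φ := by
  simp [Mfun]

/-- The maps to `S.X₂`. -/
noncomputable def uMap (j : J) : (Mfun hS D₃ e₃ l hl).obj j ⟶ S.X₂ :=
  biprod.desc S.f (l j)

lemma Mmap_u {j j' : J} (φ : j ⟶ j') :
    (Mfun hS D₃ e₃ l hl).map φ ≫ uMap hS D₃ e₃ l hl j' = uMap hS D₃ e₃ l hl j := by
  apply biprod.hom_ext'
  · erw [← Category.assoc, inl_Mmap]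
    simp [uMap]; erw [biprod.inl_desc]
  · simp only [Mfun, uMap, Preadditive.comp_add, Preadditive.add_comp, Category.assoc]
    simp [(delta hS D₃ e₃ l hl φ).2, Preadditive.comp_sub]

lemma u_g (j : J) :
    uMap hS D₃ e₃ l hl j ≫ S.g = biprod.snd ≫ colimit.ι D₃ j ≫ e₃.hom := by
  apply biprod.hom_ext'
  · simp only [uMap]; erw [biprod.inl_desc_assoc]; simp
  · simp only [uMap]; erw [biprod.inr_desc_assoc]; simp [hl j]

/-- The cocone on the middle diagram with point `S.X₂`. -/
noncomputable def coconeM : Cocone (Mfun hS D₃ e₃ l hl) where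
  pt := S.X₂
  ι :=
    { app := uMap hS D₃ e₃ l hl
      naturality := fun a b f => by
        rw [Mmap_u]
        simp }

lemma bijective_descM [IsFiltered J] :
    Function.Bijective
      (colimit.desc (Mfun hS D₃ e₃ l hl) (coconeM hS D₃ e₃ l hl)) := by
  set M := Mfun hS D₃ e₃ l hl with hM
  constructor
  · intro z₁ z₂ hz12
    suffices h : ∀ z : ↑(colimit M),
        colimit.desc M (coconeM hS D₃ e₃ l hl) z = 0 → z = 0 by
      have := h (z₁ - z₂) (by rw [map_sub, hz12, sub_self])
      exact sub_eq_zero.mp this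
    intro z hz
    obtain ⟨j, x, rfl⟩ := Concrete.colimit_exists_rep M z
    have hz' : uMap hS D₃ e₃ l hl j x = 0 := by
      have h0 : (colimit.ι M j ≫ colimit.desc M (coconeM hS D₃ e₃ l hl)) x = 0 := hz
      rwa [colimit.ι_desc] at h0
    set p : ↑(D₃.obj j) := (biprod.snd : M.obj j ⟶ D₃.obj j) x with hp
    have h3 : e₃.hom (colimit.ι D₃ j p) = 0 := by
      have h1 : (uMap hS D₃ e₃ l hl j ≫ S.g) x = 0 := by
        show S.g (uMap hS D₃ e₃ l hl j x) = 0
        rw [hz', map_zero]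
      rwa [u_g] at h1
    have h4 : colimit.ι D₃ j p = 0 := by
      calc colimit.ι D₃ j p
          = e₃.inv (e₃.hom (colimit.ι D₃ j p)) :=
            (congr($(e₃.hom_inv_id) (colimit.ι D₃ j p))).symm
        _ = e₃.inv 0 := by rw [h3]
        _ = 0 := map_zero _
    obtain ⟨j', i, hi0⟩ := Concrete.colimit_rep_eq_zero R D₃ j p h4
    have hi : D₃.map i p = 0 := hi0
    set y : ↑(M.obj j') := M.map i x with hy
    have hy_snd : (biprod.snd : M.obj j' ⟶ D₃.obj j') y = 0 := by
      have := congr($(Mmap_snd hS D₃ e₃ l hl i) x)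
      rw [show (biprod.snd : M.obj j' ⟶ D₃.obj j') y
        = (M.map i ≫ biprod.snd) x from rfl, this]
      show D₃.map i p = 0
      exact hi
    have hy_u : uMap hS D₃ e₃ l hl j' y = 0 := by
      have := congr($(Mmap_u hS D₃ e₃ l hl i) x)
      rw [show uMap hS D₃ e₃ l hl j' y
        = (M.map i ≫ uMap hS D₃ e₃ l hl j') x from rfl, this, hz']
    have hy_fst : (biprod.fst : M.obj j' ⟶ S.X₁) y = 0 := by
      apply hS.moduleCat_injective_f
      have hdec : y = (biprod.inl : S.X₁ ⟶ M.obj j')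
            ((biprod.fst : M.obj j' ⟶ S.X₁) y)
          + (biprod.inr : D₃.obj j' ⟶ M.obj j')
            ((biprod.snd : M.obj j' ⟶ D₃.obj j') y) :=
        (congr($(biprod.total (X := S.X₁) (Y := D₃.obj j')) y)).symm
      have := hy_u
      erw [hdec, map_add] at this
      rw [show uMap hS D₃ e₃ l hl j' ((biprod.inl : S.X₁ ⟶ M.obj j')
          ((biprod.fst : M.obj j' ⟶ S.X₁) y))
        = S.f ((biprod.fst : M.obj j' ⟶ S.X₁) y) from
          congr($(biprod.inl_desc S.f (l j')) ((biprod.fst : M.obj j' ⟶ S.X₁) y)),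
        show uMap hS D₃ e₃ l hl j' ((biprod.inr : D₃.obj j' ⟶ M.obj j')
          ((biprod.snd : M.obj j' ⟶ D₃.obj j') y))
        = l j' ((biprod.snd : M.obj j' ⟶ D₃.obj j') y) from
          congr($(biprod.inr_desc S.f (l j')) ((biprod.snd : M.obj j' ⟶ D₃.obj j') y)),
        hy_snd, map_zero, add_zero] at this
      rw [this, map_zero]
    have hy0 : y = 0 := by
      have hdec2 : y = (biprod.inl : S.X₁ ⟶ M.obj j')
            ((biprod.fst : M.obj j' ⟶ S.X₁) y)
          + (biprod.inr : D₃.obj j' ⟶ M.obj j')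
            ((biprod.snd : M.obj j' ⟶ D₃.obj j') y) :=
        (congr($(biprod.total (X := S.X₁) (Y := D₃.obj j')) y)).symm
      conv_lhs => rw [hdec2]
      rw [hy_fst, hy_snd, map_zero, map_zero, add_zero]
      rfl
    calc colimit.ι M j x = (M.map i ≫ colimit.ι M j') x :=
          (congr($(colimit.w M i) x)).symm
      _ = colimit.ι M j' y := rfl
      _ = 0 := by rw [hy0, map_zero]
  · intro x₂
    change ↑S.X₂ at x₂
    obtain ⟨j, p, hp0⟩ := Concrete.colimit_exists_rep D₃ (e₃.inv (S.g x₂))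
    have hp : colimit.ι D₃ j p = e₃.inv (S.g x₂) := hp0
    have hgq : S.g (l j p) = S.g x₂ := by
      have h1 : S.g (l j p) = e₃.hom (colimit.ι D₃ j p) := congr($(hl j) p)
      rw [h1, hp]
      exact congr($(e₃.inv_hom_id) (S.g x₂))
    obtain ⟨a, ha⟩ := (S.moduleCat_exact_iff.mp hS.exact) (x₂ - l j p)
      (by rw [map_sub, hgq, sub_self])
    set M := Mfun hS D₃ e₃ l hl
    refine ⟨colimit.ι M j ((biprod.inl : S.X₁ ⟶ M.obj j) a
      + (biprod.inr : D₃.obj j ⟶ M.obj j) p), ?_⟩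
    have hd : colimit.desc M (coconeM hS D₃ e₃ l hl) (colimit.ι M j
        ((biprod.inl : S.X₁ ⟶ M.obj j) a + (biprod.inr : D₃.obj j ⟶ M.obj j) p))
      = uMap hS D₃ e₃ l hl j
        ((biprod.inl : S.X₁ ⟶ M.obj j) a + (biprod.inr : D₃.obj j ⟶ M.obj j) p) :=
      congr($(colimit.ι_desc (coconeM hS D₃ e₃ l hl) j)
        ((biprod.inl : S.X₁ ⟶ M.obj j) a + (biprod.inr : D₃.obj j ⟶ M.obj j) p))
    erw [hd, map_add,
      show uMap hS D₃ e₃ l hl j ((biprod.inl : S.X₁ ⟶ M.obj j) a) = S.f a from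
        congr($(biprod.inl_desc S.f (l j)) a),
      show uMap hS D₃ e₃ l hl j ((biprod.inr : D₃.obj j ⟶ M.obj j) p) = l j p from
        congr($(biprod.inr_desc S.f (l j)) p),
      ha]
    abel

noncomputable def isColimitCoconeM [IsFiltered J] :
    IsColimit (coconeM hS D₃ e₃ l hl) := by
  haveI : IsIso ((colimit.isColimit (Mfun hS D₃ e₃ l hl)).desc (coconeM hS D₃ e₃ l hl)) := by
    have h : Function.Bijective ((forget (ModuleCat.{u} R)).map
        ((colimit.isColimit (Mfun hS D₃ e₃ l hl)).desc (coconeM hS D₃ e₃ l hl))) :=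
      bijective_descM hS D₃ e₃ l hl
    exact (ConcreteCategory.isIso_iff_bijective _).mpr h
  exact IsColimit.ofPointIso (colimit.isColimit (Mfun hS D₃ e₃ l hl))

/-- The diagram of split short exact sequences. -/
noncomputable def Dfun : J ⥤ ShortComplex (ModuleCat.{u} R) where
  obj j := ShortComplex.mk (biprod.inl : S.X₁ ⟶ S.X₁ ⊞ D₃.obj j)
    (biprod.snd : S.X₁ ⊞ D₃.obj j ⟶ D₃.obj j) (by simp)
  map {j j'} φ :=
    { τ₁ := 𝟙 S.X₁
      τ₂ := (Mfun hS D₃ e₃ l hl).map φ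
      τ₃ := D₃.map φ
      comm₁₂ := by erw [inl_Mmap]; simp
      comm₂₃ := by erw [Mmap_snd] }
  map_id j := by
    apply ShortComplex.Hom.ext
    · rfl
    · show (Mfun hS D₃ e₃ l hl).map (𝟙 j) = 𝟙 _
      rw [CategoryTheory.Functor.map_id]
    · show D₃.map (𝟙 j) = 𝟙 _
      rw [CategoryTheory.Functor.map_id]
  map_comp φ ψ := by
    apply ShortComplex.Hom.ext
    · show 𝟙 S.X₁ = 𝟙 S.X₁ ≫ 𝟙 S.X₁
      simp
    · exact (Mfun hS D₃ e₃ l hl).map_comp φ ψ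
    · exact D₃.map_comp φ ψ

/-- The cocone on `Dfun` with point `S`. -/
noncomputable def coconeD : Cocone (Dfun hS D₃ e₃ l hl) where
  pt := S
  ι :=
    { app := fun j =>
        { τ₁ := 𝟙 S.X₁
          τ₂ := uMap hS D₃ e₃ l hl j
          τ₃ := colimit.ι D₃ j ≫ e₃.hom
          comm₁₂ := by
            show 𝟙 S.X₁ ≫ S.f
              = (biprod.inl : S.X₁ ⟶ S.X₁ ⊞ D₃.obj j) ≫ biprod.desc S.f (l j)
            simp
          comm₂₃ := u_g hS D₃ e₃ l hl j }
      naturality := fun a b f => by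
        apply ShortComplex.Hom.ext
        · show 𝟙 S.X₁ ≫ 𝟙 S.X₁ = 𝟙 S.X₁ ≫ 𝟙 S.X₁
          rfl
        · show (Mfun hS D₃ e₃ l hl).map f ≫ uMap hS D₃ e₃ l hl b
            = uMap hS D₃ e₃ l hl a ≫ 𝟙 S.X₂
          rw [Mmap_u, Category.comp_id]
        · show D₃.map f ≫ colimit.ι D₃ b ≫ e₃.hom
            = (colimit.ι D₃ a ≫ e₃.hom) ≫ 𝟙 S.X₃
          rw [← Category.assoc, colimit.w, Category.comp_id] }

noncomputable def isColimitCoconeD [IsFiltered J] : IsColimit (coconeD hS D₃ e₃ l hl) := by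
  haveI := IsFiltered.isConnected J
  apply ShortComplex.isColimitOfIsColimitπ
  · -- π₁
    exact
      { desc := fun s => s.ι.app Classical.ofNonempty
        fac := fun s j => by
          have hconst : ∀ a b : J, s.ι.app a = s.ι.app b := by
            intro a b
            apply constant_of_preserves_morphisms (α := (S.X₁ ⟶ s.pt))
              (fun k => s.ι.app k)
            intro j₁ j₂ f
            rw [← s.w f]
            show 𝟙 S.X₁ ≫ s.ι.app j₂ = s.ι.app j₂
            erw [Category.id_comp]
          show 𝟙 S.X₁ ≫ s.ι.app Classical.ofNonempty = s.ι.app j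
          erw [Category.id_comp]
          exact hconst Classical.ofNonempty j
        uniq := fun s m hm => by
          exact (Category.id_comp m).symm.trans (hm Classical.ofNonempty) }
  · -- π₂
    refine (IsColimit.precomposeHomEquiv
      (NatIso.ofComponents (fun j => Iso.refl ((Mfun hS D₃ e₃ l hl).obj j))
        (fun f => by
          show (Mfun hS D₃ e₃ l hl).map f ≫ 𝟙 _ = 𝟙 _ ≫ (Mfun hS D₃ e₃ l hl).map f
          rw [Category.comp_id, Category.id_comp]) :
          Mfun hS D₃ e₃ l hl ≅ Dfun hS D₃ e₃ l hl ⋙ ShortComplex.π₂) _) ?_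
    refine IsColimit.ofIsoColimit (isColimitCoconeM hS D₃ e₃ l hl)
      (Cocones.ext (Iso.refl S.X₂) (fun j => ?_))
    show uMap hS D₃ e₃ l hl j ≫ 𝟙 S.X₂ = 𝟙 _ ≫ uMap hS D₃ e₃ l hl j
    rw [Category.comp_id, Category.id_comp]
  · -- π₃
    refine (IsColimit.precomposeHomEquiv
      (NatIso.ofComponents (fun j => Iso.refl (D₃.obj j))
        (fun f => by
          show D₃.map f ≫ 𝟙 _ = 𝟙 _ ≫ D₃.map f
          rw [Category.comp_id, Category.id_comp]) :
          D₃ ≅ Dfun hS D₃ e₃ l hl ⋙ ShortComplex.π₃) _) ?_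
    refine IsColimit.ofIsoColimit (colimit.isColimit D₃)
      (Cocones.ext e₃ (fun j => ?_))
    show colimit.ι D₃ j ≫ e₃.hom = 𝟙 _ ≫ (colimit.ι D₃ j ≫ e₃.hom)
    rw [Category.id_comp]

end Main

/-- Every short exact sequence `0 → F → G → H → 0` of `κ`-flat left `R`-modules is
a `κ`-filtered colimit of split short exact sequences of `κ`-flat left `R`-modules. -/
theorem shortExact_of_kappaFlat_is_filtered_colimit_of_split
    (κ : Cardinal.{u}) (hκ : κ.IsRegular)
    (S : ShortComplex (ModuleCat.{u} R)) (hS : S.ShortExact)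
    (h₁ : IsKappaFlat κ S.X₁) (h₂ : IsKappaFlat κ S.X₂) (h₃ : IsKappaFlat κ S.X₃) :
    ∃ (J : Type u) (_ : SmallCategory J) (_ : IsCardFiltered J κ)
      (D : J ⥤ ShortComplex (ModuleCat.{u} R))
      (_ : ∀ j, (D.obj j).ShortExact ∧ Nonempty ((D.obj j).Splitting) ∧
        IsKappaFlat κ (D.obj j).X₁ ∧ IsKappaFlat κ (D.obj j).X₂ ∧
        IsKappaFlat κ (D.obj j).X₃)
      (c : Cocone D) (_ : IsColimit c), Nonempty (c.pt ≅ S) := by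
  obtain ⟨J, instJ, hJ, D₃, hproj, c₃, hc₃, ⟨e⟩⟩ := h₃
  letI := instJ
  haveI := hJ.isFiltered hκ
  haveI := hS.epi_g
  let e₃ : colimit D₃ ≅ S.X₃ :=
    (colimit.isColimit D₃).coconePointUniqueUpToIso hc₃ ≪≫ e
  let l : ∀ j, D₃.obj j ⟶ S.X₂ := fun j =>
    haveI := hproj j
    Projective.factorThru (colimit.ι D₃ j ≫ e₃.hom) S.g
  have hl : ∀ j, l j ≫ S.g = colimit.ι D₃ j ≫ e₃.hom := fun j =>
    haveI := hproj j
    Projective.factorThru_comp _ _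
  refine ⟨J, instJ, hJ, Dfun hS D₃ e₃ l hl, fun j => ?_,
    coconeD hS D₃ e₃ l hl, isColimitCoconeD hS D₃ e₃ l hl, ⟨Iso.refl S⟩⟩
  refine ⟨(ShortComplex.Splitting.ofHasBinaryBiproduct S.X₁ (D₃.obj j)).shortExact,
    ⟨ShortComplex.Splitting.ofHasBinaryBiproduct S.X₁ (D₃.obj j)⟩,
    h₁, isKappaFlat_biprod hκ h₁ (D₃.obj j) (hproj j),
    isKappaFlat_of_projective hκ hJ (D₃.obj j) (hproj j)⟩
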